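/- arXiv:2404.03895 — 8 statements merged into one kernel-verified Lean document; each statement's English description precedes it below -/
import Mathlib

section
/- Let p be a prime and let G be a finite p-group of exponent p^2. Then either G has exactly one cyclic subgroup of order p^2, or G contains at least two cyclic subgroups M and N of order p^2 such that the intersection M ∩ N has order p. -/
/-- The vertex set of the normal subgroup based power graph: `(G \ H) ∪ {e}`. -/
def nsbVertexSet {G : Type*} [Group G] (H : Subgroup G) : Set G :=
  {x | x ∉ H} ∪ {1}

/-- The normal subgroup based power graph `Γ_H(G)`: vertices are `(G \ H) ∪ {e}` and two
distinct vertices `a`, `b` are adjacent iff `aH = b^m H` or `bH = a^n H` for some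
positive integers `m`, `n`. -/
def nsbPowerGraph (G : Type*) [Group G] (H : Subgroup G) :
    SimpleGraph (nsbVertexSet H) where
  Adj a b := (a : G) ≠ (b : G) ∧
    ((∃ m : ℕ, 0 < m ∧ (QuotientGroup.mk (a : G) : G ⧸ H) = QuotientGroup.mk ((b : G) ^ m)) ∨
     (∃ n : ℕ, 0 < n ∧ (QuotientGroup.mk (b : G) : G ⧸ H) = QuotientGroup.mk ((a : G) ^ n)))
  symm := ⟨fun a b => fun ⟨hne, h⟩ => ⟨hne.symm, h.symm⟩⟩
  loopless := ⟨fun a => fun ⟨hne, _⟩ => hne rfl⟩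

/-- The power graph of a group: two distinct elements are adjacent iff one is a positive
power of the other. -/
def powerGraph (K : Type*) [Group K] : SimpleGraph K where
  Adj x y := x ≠ y ∧ ((∃ m : ℕ, 0 < m ∧ x = y ^ m) ∨ (∃ n : ℕ, 0 < n ∧ y = x ^ n))
  symm := ⟨fun x y => fun ⟨hne, h⟩ => ⟨hne.symm, h.symm⟩⟩
  loopless := ⟨fun x => fun ⟨hne, _⟩ => hne rfl⟩

/-- The complete graph `K_n`. -/
def kGraph (n : ℕ) : SimpleGraph (Fin n) := ⊤

/-- The disjoint union `mK_n` of `m` copies of the complete graph `K_n`. -/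
def unionKGraph (m n : ℕ) : SimpleGraph (Fin m × Fin n) where
  Adj x y := x.1 = y.1 ∧ x.2 ≠ y.2
  symm := ⟨fun x y => fun ⟨h1, h2⟩ => ⟨h1.symm, h2.symm⟩⟩
  loopless := ⟨fun x => fun ⟨_, h⟩ => h rfl⟩

/-- The join `Γ₁ ∨ Γ₂` of two graphs: their disjoint union together with all edges
between the two parts. -/
def graphJoin {α β : Type*} (G : SimpleGraph α) (H : SimpleGraph β) :
    SimpleGraph (α ⊕ β) where
  Adj u v := match u, v with
    | Sum.inl u, Sum.inl v => G.Adj u v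
    | Sum.inr u, Sum.inr v => H.Adj u v
    | _, _ => True
  symm := ⟨fun u v => match u, v with
    | Sum.inl u, Sum.inl v => G.adj_symm
    | Sum.inr u, Sum.inr v => H.adj_symm
    | Sum.inl _, Sum.inr _ | Sum.inr _, Sum.inl _ => fun _ => trivial⟩
  loopless := ⟨fun u => by cases u <;> simp [SimpleGraph.irrefl]⟩


open Subgroup

lemma zpowers_isCyclic' {G : Type*} [Group G] (a : G) : IsCyclic (zpowers a) := by
  refine ⟨⟨⟨a, mem_zpowers a⟩, fun x => ?_⟩⟩
  obtain ⟨k, hk⟩ := x.2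
  exact ⟨k, Subtype.ext (by simpa using hk)⟩

lemma aux_construct {G : Type*} [Group G] [Fintype G] (p : ℕ) (hp : p.Prime)
    (hexp : Monoid.exponent G = p ^ 2) (a x : G) (ha : orderOf a = p ^ 2)
    (hcomm : Commute a x) (hx : x ∉ zpowers a) :
    ∃ N : Subgroup G, zpowers a ≠ N ∧ IsCyclic ↥N ∧ Nat.card ↥N = p ^ 2 ∧
      Nat.card ↥(zpowers a ⊓ N) = p := by
  have hp1 : 1 < p := hp.one_lt
  have hppos : 0 < p := hp.pos
  -- every element has order dividing p^2
  have hpow2 : ∀ g : G, g ^ p ^ 2 = 1 := by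
    intro g; rw [← hexp]; exact Monoid.pow_exponent_eq_one g
  -- find x' ∉ zpowers a with x'^p ∈ zpowers a, commuting with a
  have hP2 : x ^ p ^ 2 ∈ zpowers a := by rw [hpow2 x]; exact one_mem _
  have hEx : ∃ k, x ^ p ^ k ∈ zpowers a := ⟨2, hP2⟩
  classical
  set k := Nat.find hEx with hkdef
  have hk : x ^ p ^ k ∈ zpowers a := Nat.find_spec hEx
  have hk0 : k ≠ 0 := by
    intro h
    have := hk
    rw [h, pow_zero, pow_one] at this
    exact hx this
  have hkm : x ^ p ^ (k - 1) ∉ zpowers a := Nat.find_min hEx (by omega)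
  set x' := x ^ p ^ (k - 1) with hx'def
  have hx'p : x' ^ p ∈ zpowers a := by
    rw [hx'def, ← pow_mul, ← pow_succ]
    have : k - 1 + 1 = k := by omega
    rwa [this]
  have hcax' : Commute a x' := hcomm.pow_right _
  obtain ⟨m, hm0⟩ := hx'p
  have hm : a ^ m = x' ^ p := hm0
  -- p ∣ m
  have hmp : a ^ (m * p) = 1 := by
    rw [zpow_mul, hm]
    norm_cast
    rw [← pow_mul, ← sq]
    exact hpow2 x'
  have hdvd : ((p : ℤ) ^ 2) ∣ m * p := by
    have h := (orderOf_dvd_iff_zpow_eq_one).mpr hmp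
    rw [ha] at h
    exact_mod_cast h
  have hpm : (p : ℤ) ∣ m := by
    rcases hdvd with ⟨t, ht⟩
    have hpz : (p : ℤ) ≠ 0 := by exact_mod_cast hppos.ne'
    refine ⟨t, mul_right_cancel₀ hpz ?_⟩
    rw [ht]; ring
  obtain ⟨c, hc⟩ := hpm
  -- define w
  set w := x' * a ^ ((1 : ℤ) - c) with hwdef
  have hcw : Commute x' (a ^ ((1 : ℤ) - c)) := (hcax'.symm).zpow_right _
  have hwp : w ^ p = a ^ p := by
    rw [hwdef, hcw.mul_pow]
    have h1 : (a ^ ((1 : ℤ) - c)) ^ p = a ^ (((1 : ℤ) - c) * p) := by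
      rw [← zpow_natCast, ← zpow_mul]
    have h2 : x' ^ p = a ^ (p * c : ℤ) := by rw [← hm, hc]
    rw [h1, h2, ← zpow_add]
    have : (p * c + (1 - c) * p : ℤ) = (p : ℤ) := by ring
    rw [this, zpow_natCast]
  have hwnot : w ∉ zpowers a := by
    intro h
    have : x' ∈ zpowers a := by
      have := mul_mem h (inv_mem (zpow_mem (mem_zpowers a) ((1 : ℤ) - c)))
      rwa [hwdef, mul_inv_cancel_right] at this
    exact hkm this
  have hanp : a ^ p ≠ 1 := by
    intro h
    have := orderOf_dvd_of_pow_eq_one h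
    rw [ha] at this
    have := Nat.le_of_dvd hppos this
    nlinarith
  have hwo : orderOf w = p ^ 2 := by
    have hdvd2 : orderOf w ∣ p ^ 2 := by
      apply orderOf_dvd_of_pow_eq_one
      rw [pow_two, pow_mul, hwp, ← pow_mul, ← pow_two, hpow2]
    obtain ⟨i, hi, hei⟩ := (Nat.dvd_prime_pow hp).mp hdvd2
    interval_cases i
    · exfalso; apply hanp
      rw [← hwp]
      have h1 : orderOf w = 1 := by simpa using hei
      rw [orderOf_eq_one_iff.mp h1, one_pow]
    · exfalso; apply hanp
      rw [← hwp]
      have h1 := pow_orderOf_eq_one w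
      rwa [hei, pow_one] at h1
    · exact hei
  refine ⟨zpowers w, ?_, zpowers_isCyclic' w, by rw [Nat.card_zpowers, hwo], ?_⟩
  · intro h; exact hwnot (h ▸ mem_zpowers w)
  · -- card of intersection
    have hmem : a ^ p ∈ zpowers a ⊓ zpowers w :=
      ⟨pow_mem (mem_zpowers a) p, hwp ▸ pow_mem (mem_zpowers w) p⟩
    have hoap : orderOf (a ^ p) = p := by
      rw [orderOf_pow, ha]
      have hg : Nat.gcd (p ^ 2) p = p := Nat.gcd_eq_right (dvd_pow_self p two_ne_zero)
      rw [hg, pow_two, Nat.mul_div_cancel _ hppos]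
    have hpdvd : p ∣ Nat.card ↥(zpowers a ⊓ zpowers w) := by
      rw [← hoap]
      exact Subgroup.orderOf_dvd_natCard _ hmem
    have hcdvd : Nat.card ↥(zpowers a ⊓ zpowers w) ∣ p ^ 2 := by
      have := card_dvd_of_le (inf_le_right : zpowers a ⊓ zpowers w ≤ zpowers w)
      rwa [Nat.card_zpowers, hwo] at this
    obtain ⟨i, hi, hei⟩ := (Nat.dvd_prime_pow hp).mp hcdvd
    interval_cases i
    · exfalso
      rw [hei, pow_zero] at hpdvd
      exact hp.one_lt.ne' (Nat.eq_one_of_dvd_one hpdvd)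
    · simpa using hei
    · exfalso
      have heq : zpowers a ⊓ zpowers w = zpowers w := by
        apply Subgroup.eq_of_le_of_card_ge inf_le_right
        rw [hei, Nat.card_zpowers, hwo]
      have hmemw : w ∈ zpowers a ⊓ zpowers w := by rw [heq]; exact mem_zpowers w
      exact hwnot hmemw.1

lemma gen_of_cyclic {G : Type*} [Group G] [Fintype G] {M : Subgroup G} (hMc : IsCyclic ↥M)
    {n : ℕ} (hn : Nat.card ↥M = n) :
    ∃ a : G, orderOf a = n ∧ Subgroup.zpowers a = M := by
  obtain ⟨g, hg⟩ := hMc.exists_generator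
  have htop : Subgroup.zpowers g = ⊤ := by
    rw [Subgroup.eq_top_iff']; exact hg
  have hog : orderOf g = n := by
    rw [← hn, ← Nat.card_zpowers, htop, Subgroup.card_top]
  have hoa : orderOf ((g : G)) = n := by
    rw [← hog]
    exact orderOf_injective M.subtype M.subtype_injective g
  refine ⟨(g : G), hoa, ?_⟩
  apply Subgroup.eq_of_le_of_card_ge (Subgroup.zpowers_le.mpr g.2)
  rw [Nat.card_zpowers, hoa, hn]

/-- A finite `p`-group of exponent `p²` has exactly one cyclic subgroup of
order `p²`, or two cyclic subgroups `M`, `N` of order `p²` with `|M ∩ N| = p`. -/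
theorem statement_5 {G : Type*} [Group G] [Fintype G] (p : ℕ) (hp : p.Prime)
    (hpG : IsPGroup p G) (hexp : Monoid.exponent G = p ^ 2) :
    (∃! K : Subgroup G, IsCyclic ↥K ∧ Nat.card ↥K = p ^ 2) ∨
    (∃ M N : Subgroup G, M ≠ N ∧ IsCyclic ↥M ∧ IsCyclic ↥N ∧
      Nat.card ↥M = p ^ 2 ∧ Nat.card ↥N = p ^ 2 ∧ Nat.card ↥(M ⊓ N) = p) := by
  classical
  have hppos : 0 < p := hp.pos
  -- there exists an element of order p^2
  have hg : ∃ g : G, orderOf g = p ^ 2 := by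
    by_contra h
    push_neg at h
    have hall : ∀ g : G, orderOf g ∣ p := by
      intro g
      have hd : orderOf g ∣ p ^ 2 := by
        rw [← hexp]; exact Monoid.order_dvd_exponent g
      obtain ⟨i, hi, hei⟩ := (Nat.dvd_prime_pow hp).mp hd
      interval_cases i
      · rw [hei, pow_zero]; exact one_dvd p
      · rw [hei, pow_one]
      · exact absurd hei (h g)
    have : Monoid.exponent G ∣ p := Monoid.exponent_dvd.mpr hall
    rw [hexp] at this
    have := Nat.le_of_dvd hppos this
    nlinarith [hp.two_le]
  obtain ⟨g, hg⟩ := hg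
  set P : Subgroup G → Prop := fun K => IsCyclic ↥K ∧ Nat.card ↥K = p ^ 2 with hPdef
  have hP0 : P (Subgroup.zpowers g) :=
    ⟨zpowers_isCyclic' g, by rw [Nat.card_zpowers, hg]⟩
  by_cases huniq : ∃! K : Subgroup G, P K
  · left; exact huniq
  · right
    have h2 : ¬ ∀ y, P y → y = Subgroup.zpowers g := fun h => huniq ⟨_, hP0, h⟩
    push_neg at h2
    obtain ⟨N, hPN, hNne⟩ := h2
    -- M := zpowers g, N distinct, both cyclic of order p^2
    set M := Subgroup.zpowers g with hMdef
    have hMc : IsCyclic ↥M := hP0.1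
    have hMcard : Nat.card ↥M = p ^ 2 := hP0.2
    have hNc : IsCyclic ↥N := hPN.1
    have hNcard : Nat.card ↥N = p ^ 2 := hPN.2
    have hMN : M ≠ N := fun h => hNne h.symm
    -- case on card of intersection
    have hdvd : Nat.card ↥(M ⊓ N) ∣ p ^ 2 := by
      have := Subgroup.card_dvd_of_le (inf_le_left : M ⊓ N ≤ M)
      rwa [hMcard] at this
    obtain ⟨i, hi, hei⟩ := (Nat.dvd_prime_pow hp).mp hdvd
    interval_cases i
    · -- trivial intersection: use the center
      rw [pow_zero, Subgroup.card_eq_one] at hei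
      have hnt : Nontrivial G := by
        refine ⟨⟨g, 1, fun h => ?_⟩⟩
        rw [h, orderOf_one] at hg
        nlinarith [hp.two_le]
      haveI := Fact.mk hp
      have hcnt : Nontrivial (Subgroup.center G) := hpG.center_nontrivial
      obtain ⟨z, hz⟩ := exists_ne (1 : Subgroup.center G)
      have hz1 : (z : G) ≠ 1 := fun h => hz (Subtype.ext h)
      have hzc : ∀ a : G, Commute a (z : G) := fun a =>
        (Subgroup.mem_center_iff.mp z.2) a
    -- z is not in both M and N
      have hznot : (z : G) ∉ M ∨ (z : G) ∉ N := by
        by_contra h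
        push_neg at h
        have : (z : G) ∈ M ⊓ N := ⟨h.1, h.2⟩
        rw [hei] at this
        exact hz1 this
      rcases hznot with hzM | hzN
      · obtain ⟨a, hoa, hza⟩ := gen_of_cyclic hMc hMcard
        obtain ⟨N', hne', hcyc', hcard', hint'⟩ :=
          aux_construct p hp hexp a (z : G) hoa (hzc a) (by rw [hza]; exact hzM)
        rw [hza] at hne' hint'
        exact ⟨M, N', hne', hMc, hcyc', hMcard, hcard', hint'⟩
      · obtain ⟨b, hob, hzb⟩ := gen_of_cyclic hNc hNcard
        obtain ⟨N', hne', hcyc', hcard', hint'⟩ :=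
          aux_construct p hp hexp b (z : G) hob (hzc b) (by rw [hzb]; exact hzN)
        rw [hzb] at hne' hint'
        exact ⟨N, N', hne', hNc, hcyc', hNcard, hcard', hint'⟩
    · exact ⟨M, N, hMN, hMc, hNc, hMcard, hNcard, by rw [hei, pow_one]⟩
    · -- card p^2: then M = N, contradiction
      exfalso
      have hMeq : M ⊓ N = M := Subgroup.eq_of_le_of_card_ge inf_le_left (by rw [hei, hMcard])
      have hMle : M ≤ N := hMeq ▸ inf_le_right
      exact hMN (Subgroup.eq_of_le_of_card_ge hMle (by rw [hMcard, hNcard]))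
end

section
/- Let G be a finite group, H a proper normal subgroup of G, and let a ∈ G \ H. Then the set aH ∪ {e} is a clique in the normal subgroup based power graph Γ_H(G); that is, the subgraph of Γ_H(G) induced by aH ∪ {e} is a complete graph on |H| + 1 vertices. -/
open scoped Pointwise

/-- For `a ∈ G \ H`, the set `aH ∪ {e}` is a clique of `|H| + 1` vertices in
`Γ_H(G)`. -/
theorem statement_6 {G : Type*} [Group G] [Fintype G] (H : Subgroup G) [H.Normal]
    (hproper : H ≠ ⊤) (a : G) (ha : a ∉ H) :
    (nsbPowerGraph G H).IsClique
      {v : nsbVertexSet H | (v : G) ∈ a • (H : Set G) ∨ (v : G) = 1} ∧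
    ({v : nsbVertexSet H | (v : G) ∈ a • (H : Set G) ∨ (v : G) = 1}).ncard
      = Nat.card H + 1 := by
  classical
  constructor
  · intro u hu v hv hne
    refine ⟨Subtype.coe_injective.ne hne, ?_⟩
    rcases hu with hu | hu <;> rcases hv with hv | hv
    · left
      refine ⟨1, one_pos, ?_⟩
      rw [pow_one, QuotientGroup.eq]
      obtain ⟨h1, hh1, hu1⟩ := hu
      obtain ⟨h2, hh2, hv1⟩ := hv
      simp only [smul_eq_mul] at hu1 hv1
      rw [← hu1, ← hv1]
      have : (a * h1)⁻¹ * (a * h2) = h1⁻¹ * h2 := by group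
      rw [this]
      exact mul_mem (inv_mem hh1) hh2
    · right
      refine ⟨orderOf (u : G), orderOf_pos _, ?_⟩
      rw [hv, pow_orderOf_eq_one]
    · left
      refine ⟨orderOf (v : G), orderOf_pos _, ?_⟩
      rw [hu, pow_orderOf_eq_one]
    · exact absurd (hu.trans hv.symm) (Subtype.coe_injective.ne hne)
  · set S : Set G := a • (H : Set G) ∪ {1} with hS
    have h1notin : (1 : G) ∉ a • (H : Set G) := by
      intro h
      obtain ⟨h1, hh1, hh⟩ := h
      simp only [smul_eq_mul] at hh
      apply ha
      rw [eq_inv_of_mul_eq_one_left hh]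
      exact inv_mem hh1
    have hnotH : ∀ x ∈ a • (H : Set G), x ∉ H := by
      intro x hx hxH
      obtain ⟨h1, hh1, hh⟩ := hx
      simp only [smul_eq_mul] at hh
      apply ha
      have : a = x * h1⁻¹ := by rw [← hh]; group
      rw [this]
      exact mul_mem hxH (inv_mem hh1)
    have hsub : S ⊆ Set.range (Subtype.val : nsbVertexSet H → G) := by
      rw [Subtype.range_val]
      rintro x (hx | hx)
      · exact Or.inl (hnotH x hx)
      · exact Or.inr hx
    have hset : {v : nsbVertexSet H | (v : G) ∈ a • (H : Set G) ∨ (v : G) = 1}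
        = Subtype.val ⁻¹' S := by
      ext v; simp [hS, or_comm]
    rw [hset]
    have himg := Set.ncard_image_of_injective (Subtype.val ⁻¹' S)
      (Subtype.coe_injective (p := fun x => x ∈ nsbVertexSet H))
    rw [Set.image_preimage_eq_inter_range, Set.inter_eq_self_of_subset_left hsub] at himg
    rw [← himg, hS, Set.ncard_union_eq (by simpa using h1notin) (Set.toFinite _)
      (Set.toFinite _), Set.ncard_singleton]
    congr 1
    rw [Set.ncard_smul_set, ← Nat.card_coe_set_eq]
    rfl
end

section
/- Let G be a finite group and H a normal subgroup of G with |H| = n such that the quotient group G/H is isomorphic to the cyclic group Z_2. Then the normal subgroup based power graph Γ_H(G) is isomorphic to the complete graph K_{n+1}. -/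
/-- If `|H| = n` and `G/H ≅ Z₂`, then `Γ_H(G) ≅ K_{n+1}`. -/
theorem statement_7 {G : Type*} [Group G] [Fintype G] (H : Subgroup G) [H.Normal]
    (n : ℕ) (hcard : Nat.card H = n)
    (hq : Nonempty (G ⧸ H ≃* Multiplicative (ZMod 2))) :
    Nonempty (nsbPowerGraph G H ≃g kGraph (n + 1)) := by

  classical
  obtain ⟨f⟩ := hq
  -- every element of the quotient squares to 1
  have hsq : ∀ x : G ⧸ H, x ^ 2 = 1 := by
    intro x
    apply f.injective
    rw [map_pow, map_one]
    exact (by decide : ∀ u : Multiplicative (ZMod 2), u ^ 2 = 1) (f x)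
  -- any two non-identity elements of the quotient are equal
  have huniq : ∀ x y : G ⧸ H, x ≠ 1 → y ≠ 1 → x = y := by
    intro x y hx hy
    apply f.injective
    have hx' : f x ≠ 1 := fun h => hx (f.injective (by simpa using h))
    have hy' : f y ≠ 1 := fun h => hy (f.injective (by simpa using h))
    exact (by decide : ∀ u v : Multiplicative (ZMod 2), u ≠ 1 → v ≠ 1 → u = v)
      (f x) (f y) hx' hy'
  -- cardinality of the vertex set
  have hQ : Nat.card (G ⧸ H) = 2 := by
    rw [Nat.card_congr f.toEquiv]
    simp [Nat.card_eq_fintype_card]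
  have hG : Nat.card G = 2 * n := by
    rw [← hcard, ← hQ]
    exact Subgroup.card_eq_card_quotient_mul_card_subgroup H
  have hcompl : ((H : Set G)ᶜ).ncard = n := by
    have h1 : (H : Set G).ncard + ((H : Set G)ᶜ).ncard = Nat.card G :=
      Set.ncard_add_ncard_compl _
    have h2 : (H : Set G).ncard = n := by
      rw [← hcard, ← Nat.card_coe_set_eq]
      rfl
    omega
  have hvset : nsbVertexSet H = (H : Set G)ᶜ ∪ {1} := by
    ext x
    simp [nsbVertexSet]
  have hcardV : Nat.card (nsbVertexSet H) = n + 1 := by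
    rw [Nat.card_coe_set_eq, hvset,
      Set.ncard_union_eq (by simp [H.one_mem]) (Set.toFinite _) (Set.toFinite _),
      hcompl, Set.ncard_singleton]
  have : Finite (nsbVertexSet H) := Set.toFinite _
  let e : nsbVertexSet H ≃ Fin (n + 1) := Finite.equivFinOfCardEq hcardV
  -- the graph is complete
  have hadj : ∀ a b : nsbVertexSet H, (a : G) ≠ (b : G) → (nsbPowerGraph G H).Adj a b := by
    intro a b hne
    refine ⟨hne, ?_⟩
    have ha := a.2
    have hb := b.2
    simp only [nsbVertexSet, Set.mem_union, Set.mem_setOf_eq, Set.mem_singleton_iff] at ha hb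
    rcases ha with ha | ha
    · rcases hb with hb | hb
      · -- both outside H, same coset
        refine Or.inl ⟨1, one_pos, ?_⟩
        rw [pow_one]
        exact huniq _ _ (by simpa [QuotientGroup.eq_one_iff] using ha)
          (by simpa [QuotientGroup.eq_one_iff] using hb)
      · -- b = 1
        refine Or.inr ⟨2, two_pos, ?_⟩
        rw [hb]
        have : (QuotientGroup.mk ((a : G) ^ 2) : G ⧸ H) = 1 := by
          rw [QuotientGroup.mk_pow]
          exact hsq _
        simp [this]
    · -- a = 1
      have hb' : (b : G) ∉ H := by
        rcases hb with hb | hb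
        · exact hb
        · exact absurd (hb ▸ ha.symm ▸ rfl : (a : G) = (b : G)) hne
      refine Or.inl ⟨2, two_pos, ?_⟩
      rw [ha]
      have : (QuotientGroup.mk ((b : G) ^ 2) : G ⧸ H) = 1 := by
        rw [QuotientGroup.mk_pow]
        exact hsq _
      simp [this]
  refine ⟨⟨e, ?_⟩⟩
  intro a b
  simp only [kGraph, SimpleGraph.top_adj]
  constructor
  · intro h
    exact hadj a b (fun hc => h (congrArg e (Subtype.ext hc)))
  · intro h
    intro hc
    exact h.1 (congrArg Subtype.val (e.injective hc))
end

section
/- Let G be a finite group and H a normal subgroup of G with |H| = 2 such that the quotient group G/H contains an element of order at least 5. Then the normal subgroup based power graph Γ_H(G) contains a clique on 9 vertices, i.e., a subgraph isomorphic to the complete graph K_9. -/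
/-- If `|H| = 2` and `G/H` has an element of order at least `5`, then
`Γ_H(G)` contains a clique on `9` vertices. -/
theorem statement_9 {G : Type*} [Group G] [Fintype G] (H : Subgroup G) [H.Normal]
    (hcard : Nat.card H = 2) (hx : ∃ x : G ⧸ H, 5 ≤ orderOf x) :
    ∃ S : Set (nsbVertexSet H), (nsbPowerGraph G H).IsClique S ∧ S.ncard = 9 := by
  classical
  obtain ⟨x, hn⟩ := hx
  set n := orderOf x with hndef
  have hn0 : 0 < n := by omega
  obtain ⟨g, hg⟩ := QuotientGroup.mk_surjective x
  have hHnt : Nontrivial H := Finite.one_lt_card_iff_nontrivial.mp (by omega)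
  obtain ⟨hsub, hsub1⟩ := exists_ne (1 : H)
  obtain ⟨h, hh⟩ := hsub
  have hh1 : h ≠ 1 := fun hc => hsub1 (Subtype.ext hc)
  have hxn : x ^ n = 1 := pow_orderOf_eq_one x
  have hxper : ∀ a b : ℕ, x ^ (n * a + b) = x ^ b := fun a b => by
    rw [pow_add, pow_mul, hxn, one_pow, one_mul]
  have hxe : ∀ a : ℕ, 0 < a → a < n → x ^ a ≠ 1 := by
    intro a h1 h2 hc
    have hd : n ∣ a := orderOf_dvd_of_pow_eq_one hc
    have := Nat.le_of_dvd h1 hd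
    omega
  have expInj : ∀ a b : ℕ, a < n → b < n → x ^ a = x ^ b → a = b := by
    intro a b ha hb hEq
    have h' : a % n = b % n := pow_eq_pow_iff_modEq.mp hEq
    rwa [Nat.mod_eq_of_lt ha, Nat.mod_eq_of_lt hb] at h'
  have I0 : ∀ a : ℕ, (x ^ a) ^ n = 1 := fun a => by
    rw [← pow_mul, mul_comm, pow_mul, hxn, one_pow]
  have A1 : (n - 2) * (n - 1) = n * (n - 3) + 2 := by
    obtain ⟨k, hk⟩ : ∃ k, n = k + 5 := ⟨n - 5, by omega⟩
    rw [hk]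
    have e1 : k + 5 - 2 = k + 3 := by omega
    have e2 : k + 5 - 1 = k + 4 := by omega
    have e3 : k + 5 - 3 = k + 2 := by omega
    rw [e1, e2, e3]; ring
  have I4 : x ^ 2 = (x ^ (n - 2)) ^ (n - 1) := by rw [← pow_mul, A1, hxper]
  have I5 : x ^ 2 = (x ^ (n - 1)) ^ (n - 2) := by rw [← pow_mul, Nat.mul_comm, A1, hxper]
  have I6 : x ^ (n - 2) = (x ^ (n - 1)) ^ 2 := by
    have A3 : (n - 1) * 2 = n * 1 + (n - 2) := by omega
    rw [← pow_mul, A3, hxper]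
  have hP : ∀ a b : ℕ, (a = 0 ∨ a = 1 ∨ a = 2 ∨ a = n - 2 ∨ a = n - 1) →
      (b = 0 ∨ b = 1 ∨ b = 2 ∨ b = n - 2 ∨ b = n - 1) →
      ∃ m : ℕ, 0 < m ∧ (x ^ a = (x ^ b) ^ m ∨ x ^ b = (x ^ a) ^ m) := by
    intro a b ha hb
    rcases ha with rfl | rfl | rfl | rfl | rfl <;> rcases hb with rfl | rfl | rfl | rfl | rfl <;>
      first
      | exact ⟨1, Nat.one_pos, Or.inl (pow_one _).symm⟩
      | exact ⟨n, hn0, Or.inl ((pow_zero x).trans (I0 _).symm)⟩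
      | exact ⟨n, hn0, Or.inr ((pow_zero x).trans (I0 _).symm)⟩
      | exact ⟨2, by omega, Or.inl (congrArg (· ^ 2) (pow_one x)).symm⟩
      | exact ⟨2, by omega, Or.inr (congrArg (· ^ 2) (pow_one x)).symm⟩
      | exact ⟨n - 2, by omega, Or.inl (congrArg (· ^ (n - 2)) (pow_one x)).symm⟩
      | exact ⟨n - 2, by omega, Or.inr (congrArg (· ^ (n - 2)) (pow_one x)).symm⟩
      | exact ⟨n - 1, by omega, Or.inl (congrArg (· ^ (n - 1)) (pow_one x)).symm⟩
      | exact ⟨n - 1, by omega, Or.inr (congrArg (· ^ (n - 1)) (pow_one x)).symm⟩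
      | exact ⟨n - 1, by omega, Or.inl I4⟩
      | exact ⟨n - 1, by omega, Or.inr I4⟩
      | exact ⟨n - 2, by omega, Or.inl I5⟩
      | exact ⟨n - 2, by omega, Or.inr I5⟩
      | exact ⟨2, by omega, Or.inl I6⟩
      | exact ⟨2, by omega, Or.inr I6⟩
  have hqv : ∀ (a : ℕ) (t : G), t ∈ H → (QuotientGroup.mk (g ^ a * t) : G ⧸ H) = x ^ a := by
    intro a t ht
    have h1 : (QuotientGroup.mk t : G ⧸ H) = 1 := (QuotientGroup.eq_one_iff t).mpr ht
    rw [QuotientGroup.mk_mul, QuotientGroup.mk_pow, h1, mul_one, hg]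
  have hmem : ∀ a : ℕ, 0 < a → a < n → ∀ t : G, t ∈ H → g ^ a * t ∈ nsbVertexSet H := by
    intro a h1 h2 t ht
    refine Or.inl fun hmm => ?_
    exact hxe a h1 h2 (by rw [← hqv a t ht]; exact (QuotientGroup.eq_one_iff _).mpr hmm)
  obtain ⟨u0, hu0⟩ : ∃ u : (nsbVertexSet H), (u : G) = g ^ 0 * 1 := ⟨⟨1, Or.inr rfl⟩, by simp⟩
  obtain ⟨u1, hu1⟩ : ∃ u : (nsbVertexSet H), (u : G) = g ^ 1 * 1 :=
    ⟨⟨_, hmem 1 (by omega) (by omega) 1 H.one_mem⟩, rfl⟩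
  obtain ⟨u2, hu2⟩ : ∃ u : (nsbVertexSet H), (u : G) = g ^ 1 * h :=
    ⟨⟨_, hmem 1 (by omega) (by omega) h hh⟩, rfl⟩
  obtain ⟨u3, hu3⟩ : ∃ u : (nsbVertexSet H), (u : G) = g ^ 2 * 1 :=
    ⟨⟨_, hmem 2 (by omega) (by omega) 1 H.one_mem⟩, rfl⟩
  obtain ⟨u4, hu4⟩ : ∃ u : (nsbVertexSet H), (u : G) = g ^ 2 * h :=
    ⟨⟨_, hmem 2 (by omega) (by omega) h hh⟩, rfl⟩
  obtain ⟨u5, hu5⟩ : ∃ u : (nsbVertexSet H), (u : G) = g ^ (n - 2) * 1 :=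
    ⟨⟨_, hmem (n - 2) (by omega) (by omega) 1 H.one_mem⟩, rfl⟩
  obtain ⟨u6, hu6⟩ : ∃ u : (nsbVertexSet H), (u : G) = g ^ (n - 2) * h :=
    ⟨⟨_, hmem (n - 2) (by omega) (by omega) h hh⟩, rfl⟩
  obtain ⟨u7, hu7⟩ : ∃ u : (nsbVertexSet H), (u : G) = g ^ (n - 1) * 1 :=
    ⟨⟨_, hmem (n - 1) (by omega) (by omega) 1 H.one_mem⟩, rfl⟩
  obtain ⟨u8, hu8⟩ : ∃ u : (nsbVertexSet H), (u : G) = g ^ (n - 1) * h :=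
    ⟨⟨_, hmem (n - 1) (by omega) (by omega) h hh⟩, rfl⟩
  have hq0 : (QuotientGroup.mk (u0 : G) : G ⧸ H) = x ^ 0 := by rw [hu0]; exact hqv 0 1 H.one_mem
  have hq1 : (QuotientGroup.mk (u1 : G) : G ⧸ H) = x ^ 1 := by rw [hu1]; exact hqv 1 1 H.one_mem
  have hq2 : (QuotientGroup.mk (u2 : G) : G ⧸ H) = x ^ 1 := by rw [hu2]; exact hqv 1 h hh
  have hq3 : (QuotientGroup.mk (u3 : G) : G ⧸ H) = x ^ 2 := by rw [hu3]; exact hqv 2 1 H.one_mem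
  have hq4 : (QuotientGroup.mk (u4 : G) : G ⧸ H) = x ^ 2 := by rw [hu4]; exact hqv 2 h hh
  have hq5 : (QuotientGroup.mk (u5 : G) : G ⧸ H) = x ^ (n - 2) := by
    rw [hu5]; exact hqv (n - 2) 1 H.one_mem
  have hq6 : (QuotientGroup.mk (u6 : G) : G ⧸ H) = x ^ (n - 2) := by
    rw [hu6]; exact hqv (n - 2) h hh
  have hq7 : (QuotientGroup.mk (u7 : G) : G ⧸ H) = x ^ (n - 1) := by
    rw [hu7]; exact hqv (n - 1) 1 H.one_mem
  have hq8 : (QuotientGroup.mk (u8 : G) : G ⧸ H) = x ^ (n - 1) := by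
    rw [hu8]; exact hqv (n - 1) h hh
  have hdM : ∀ (a b : ℕ) (t s : G), g ^ a * t = g ^ b * s → t ∈ H → s ∈ H →
      a < n → b < n → (a ≠ b ∨ t ≠ s) → False := by
    intro a b t s hc ht hs ha hb hd
    have h1 := hqv a t ht
    have h2 := hqv b s hs
    rw [hc] at h1
    have hab : a = b := expInj a b ha hb (h1.symm.trans h2)
    subst hab
    rcases hd with hd | hd
    · exact hd rfl
    · exact hd (mul_left_cancel hc)
  have hune : ∀ (u v : (nsbVertexSet H)) (a b : ℕ) (t s : G), (u : G) = g ^ a * t →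
      (v : G) = g ^ b * s → t ∈ H → s ∈ H → a < n → b < n → (a ≠ b ∨ t ≠ s) → u ≠ v :=
    fun u v a b t s hu hv ht hs ha hb hd hc =>
      hdM a b t s (by rw [← hu, ← hv, hc]) ht hs ha hb hd
  have hadj : ∀ (u v : (nsbVertexSet H)) (a b : ℕ),
      (QuotientGroup.mk (u : G) : G ⧸ H) = x ^ a →
      (QuotientGroup.mk (v : G) : G ⧸ H) = x ^ b →
      (a = 0 ∨ a = 1 ∨ a = 2 ∨ a = n - 2 ∨ a = n - 1) →
      (b = 0 ∨ b = 1 ∨ b = 2 ∨ b = n - 2 ∨ b = n - 1) →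
      u ≠ v → (nsbPowerGraph G H).Adj u v := by
    intro u v a b qa qb ha hb huv
    refine ⟨fun hc => huv (Subtype.ext hc), ?_⟩
    obtain ⟨m, hm, hc⟩ := hP a b ha hb
    rcases hc with hc | hc
    · exact Or.inl ⟨m, hm, by rw [QuotientGroup.mk_pow, qa, qb]; exact hc⟩
    · exact Or.inr ⟨m, hm, by rw [QuotientGroup.mk_pow, qb, qa]; exact hc⟩
  refine ⟨{u0, u1, u2, u3, u4, u5, u6, u7, u8}, ?_, ?_⟩
  · rw [SimpleGraph.isClique_iff]
    intro p hp q hq hne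
    simp only [Set.mem_insert_iff, Set.mem_singleton_iff] at hp hq
    rcases hp with rfl | rfl | rfl | rfl | rfl | rfl | rfl | rfl | rfl <;>
      rcases hq with rfl | rfl | rfl | rfl | rfl | rfl | rfl | rfl | rfl <;>
      first
      | exact absurd rfl hne
      | exact hadj _ _ _ _
          (by first
              | exact hq0
              | exact hq1
              | exact hq2
              | exact hq3
              | exact hq4
              | exact hq5
              | exact hq6
              | exact hq7
              | exact hq8)
          (by first
              | exact hq0
              | exact hq1
              | exact hq2
              | exact hq3
              | exact hq4
              | exact hq5
              | exact hq6
              | exact hq7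
              | exact hq8)
          (by omega) (by omega) hne
  · have nm0 : u0 ∉ ({u1, u2, u3, u4, u5, u6, u7, u8} : Set (nsbVertexSet H)) := by
      simp only [Set.mem_insert_iff, Set.mem_singleton_iff, not_or]
      refine ⟨?_, ?_, ?_, ?_, ?_, ?_, ?_, ?_⟩ <;>
        exact hune _ _ _ _ _ _
          (by first
              | exact hu0
              | exact hu1
              | exact hu2
              | exact hu3
              | exact hu4
              | exact hu5
              | exact hu6
              | exact hu7
              | exact hu8)
          (by first
              | exact hu0
              | exact hu1
              | exact hu2
              | exact hu3
              | exact hu4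
              | exact hu5
              | exact hu6
              | exact hu7
              | exact hu8)
          (by first | exact H.one_mem | exact hh)
          (by first | exact H.one_mem | exact hh)
          (by omega) (by omega)
          (by first | exact Or.inl (by omega) | exact Or.inr (Ne.symm hh1) | exact Or.inr hh1)
    have nm1 : u1 ∉ ({u2, u3, u4, u5, u6, u7, u8} : Set (nsbVertexSet H)) := by
      simp only [Set.mem_insert_iff, Set.mem_singleton_iff, not_or]
      refine ⟨?_, ?_, ?_, ?_, ?_, ?_, ?_⟩ <;>
        exact hune _ _ _ _ _ _
          (by first
              | exact hu0
              | exact hu1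
              | exact hu2
              | exact hu3
              | exact hu4
              | exact hu5
              | exact hu6
              | exact hu7
              | exact hu8)
          (by first
              | exact hu0
              | exact hu1
              | exact hu2
              | exact hu3
              | exact hu4
              | exact hu5
              | exact hu6
              | exact hu7
              | exact hu8)
          (by first | exact H.one_mem | exact hh)
          (by first | exact H.one_mem | exact hh)
          (by omega) (by omega)
          (by first | exact Or.inl (by omega) | exact Or.inr (Ne.symm hh1) | exact Or.inr hh1)
    have nm2 : u2 ∉ ({u3, u4, u5, u6, u7, u8} : Set (nsbVertexSet H)) := by
      simp only [Set.mem_insert_iff, Set.mem_singleton_iff, not_or]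
      refine ⟨?_, ?_, ?_, ?_, ?_, ?_⟩ <;>
        exact hune _ _ _ _ _ _
          (by first
              | exact hu0
              | exact hu1
              | exact hu2
              | exact hu3
              | exact hu4
              | exact hu5
              | exact hu6
              | exact hu7
              | exact hu8)
          (by first
              | exact hu0
              | exact hu1
              | exact hu2
              | exact hu3
              | exact hu4
              | exact hu5
              | exact hu6
              | exact hu7
              | exact hu8)
          (by first | exact H.one_mem | exact hh)
          (by first | exact H.one_mem | exact hh)
          (by omega) (by omega)
          (by first | exact Or.inl (by omega) | exact Or.inr (Ne.symm hh1) | exact Or.inr hh1)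
    have nm3 : u3 ∉ ({u4, u5, u6, u7, u8} : Set (nsbVertexSet H)) := by
      simp only [Set.mem_insert_iff, Set.mem_singleton_iff, not_or]
      refine ⟨?_, ?_, ?_, ?_, ?_⟩ <;>
        exact hune _ _ _ _ _ _
          (by first
              | exact hu0
              | exact hu1
              | exact hu2
              | exact hu3
              | exact hu4
              | exact hu5
              | exact hu6
              | exact hu7
              | exact hu8)
          (by first
              | exact hu0
              | exact hu1
              | exact hu2
              | exact hu3
              | exact hu4
              | exact hu5
              | exact hu6
              | exact hu7
              | exact hu8)
          (by first | exact H.one_mem | exact hh)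
          (by first | exact H.one_mem | exact hh)
          (by omega) (by omega)
          (by first | exact Or.inl (by omega) | exact Or.inr (Ne.symm hh1) | exact Or.inr hh1)
    have nm4 : u4 ∉ ({u5, u6, u7, u8} : Set (nsbVertexSet H)) := by
      simp only [Set.mem_insert_iff, Set.mem_singleton_iff, not_or]
      refine ⟨?_, ?_, ?_, ?_⟩ <;>
        exact hune _ _ _ _ _ _
          (by first
              | exact hu0
              | exact hu1
              | exact hu2
              | exact hu3
              | exact hu4
              | exact hu5
              | exact hu6
              | exact hu7
              | exact hu8)
          (by first
              | exact hu0
              | exact hu1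
              | exact hu2
              | exact hu3
              | exact hu4
              | exact hu5
              | exact hu6
              | exact hu7
              | exact hu8)
          (by first | exact H.one_mem | exact hh)
          (by first | exact H.one_mem | exact hh)
          (by omega) (by omega)
          (by first | exact Or.inl (by omega) | exact Or.inr (Ne.symm hh1) | exact Or.inr hh1)
    have nm5 : u5 ∉ ({u6, u7, u8} : Set (nsbVertexSet H)) := by
      simp only [Set.mem_insert_iff, Set.mem_singleton_iff, not_or]
      refine ⟨?_, ?_, ?_⟩ <;>
        exact hune _ _ _ _ _ _
          (by first
              | exact hu0
              | exact hu1
              | exact hu2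
              | exact hu3
              | exact hu4
              | exact hu5
              | exact hu6
              | exact hu7
              | exact hu8)
          (by first
              | exact hu0
              | exact hu1
              | exact hu2
              | exact hu3
              | exact hu4
              | exact hu5
              | exact hu6
              | exact hu7
              | exact hu8)
          (by first | exact H.one_mem | exact hh)
          (by first | exact H.one_mem | exact hh)
          (by omega) (by omega)
          (by first | exact Or.inl (by omega) | exact Or.inr (Ne.symm hh1) | exact Or.inr hh1)
    have nm6 : u6 ∉ ({u7, u8} : Set (nsbVertexSet H)) := by
      simp only [Set.mem_insert_iff, Set.mem_singleton_iff, not_or]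
      refine ⟨?_, ?_⟩ <;>
        exact hune _ _ _ _ _ _
          (by first
              | exact hu0
              | exact hu1
              | exact hu2
              | exact hu3
              | exact hu4
              | exact hu5
              | exact hu6
              | exact hu7
              | exact hu8)
          (by first
              | exact hu0
              | exact hu1
              | exact hu2
              | exact hu3
              | exact hu4
              | exact hu5
              | exact hu6
              | exact hu7
              | exact hu8)
          (by first | exact H.one_mem | exact hh)
          (by first | exact H.one_mem | exact hh)
          (by omega) (by omega)
          (by first | exact Or.inl (by omega) | exact Or.inr (Ne.symm hh1) | exact Or.inr hh1)
    have nm7 : u7 ∉ ({u8} : Set (nsbVertexSet H)) := by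
      simp only [Set.mem_singleton_iff]
      exact hune _ _ _ _ _ _ hu7 hu8 H.one_mem hh (by omega) (by omega)
        (Or.inr (Ne.symm hh1))
    rw [Set.ncard_insert_of_notMem nm0 (Set.toFinite _),
      Set.ncard_insert_of_notMem nm1 (Set.toFinite _),
      Set.ncard_insert_of_notMem nm2 (Set.toFinite _),
      Set.ncard_insert_of_notMem nm3 (Set.toFinite _),
      Set.ncard_insert_of_notMem nm4 (Set.toFinite _),
      Set.ncard_insert_of_notMem nm5 (Set.toFinite _),
      Set.ncard_insert_of_notMem nm6 (Set.toFinite _),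
      Set.ncard_insert_of_notMem nm7 (Set.toFinite _),
      Set.ncard_singleton]
end

section
/- Let G be a finite group and H a normal subgroup of G with |H| = 2 such that the quotient group G/H has at least four distinct cyclic subgroups of order 3, generated by a_1H, a_2H, a_3H, a_4H respectively. Then the subgraph of the normal subgroup based power graph Γ_H(G) induced by the set (a_1H ∪ a_2H ∪ a_3H ∪ a_4H) ∪ (a_1^2H ∪ a_2^2H ∪ a_3^2H ∪ a_4^2H) ∪ {e} is isomorphic to the join K_1 ∨ 4K_4. -/
/-- exponent pattern for the four elements of each block -/
def EE : Fin 4 → ℕ := ![1, 1, 2, 2]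
/-- H-element pattern for the four elements of each block -/
def DD : Fin 4 → ℕ := ![0, 1, 0, 1]

lemma EE_cases (j : Fin 4) : EE j = 1 ∨ EE j = 2 := by fin_cases j <;> simp [EE]
lemma DD_cases (j : Fin 4) : DD j = 0 ∨ DD j = 1 := by fin_cases j <;> simp [DD]
lemma ED_inj : ∀ j j' : Fin 4, EE j = EE j' → DD j = DD j' → j = j' := by decide

/-- If `x^ε = y^k` with `x, y` of order 3 and `ε ∈ {1,2}`, then `⟨x⟩ = ⟨y⟩`. -/
lemma zpowers_eq_of_pow_eq {Q : Type*} [Group Q] (x y : Q) (hx : orderOf x = 3)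
    (hy : orderOf y = 3) (ε k : ℕ) (hε : ε = 1 ∨ ε = 2) (h : x ^ ε = y ^ k) :
    Subgroup.zpowers x = Subgroup.zpowers y := by
  have hzx : Subgroup.zpowers (x ^ ε) = Subgroup.zpowers x := by
    rcases hε with rfl | rfl
    · rw [pow_one]
    · have h3 : x ^ 3 = 1 := by rw [← hx]; exact pow_orderOf_eq_one x
      have h2 : x ^ 2 = x⁻¹ := eq_inv_of_mul_eq_one_left (by rw [← pow_succ]; exact h3)
      rw [h2, Subgroup.zpowers_inv]
  have hle : Subgroup.zpowers x ≤ Subgroup.zpowers y := by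
    rw [← hzx, h]
    exact Subgroup.zpowers_le.mpr (Subgroup.pow_mem _ (Subgroup.mem_zpowers y) k)
  have hcy : Nat.card (Subgroup.zpowers y) = 3 := by rw [Nat.card_zpowers, hy]
  have hcx : Nat.card (Subgroup.zpowers x) = 3 := by rw [Nat.card_zpowers, hx]
  have : Finite (Subgroup.zpowers y) := Nat.finite_of_card_ne_zero (by omega)
  exact Subgroup.eq_of_le_of_card_ge hle (by omega)

/-- If `|H| = 2` and `G/H` has four distinct cyclic subgroups of order 3
generated by `a₁H, a₂H, a₃H, a₄H`, then the subgraph of `Γ_H(G)` induced by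
`(⋃ aᵢH) ∪ (⋃ aᵢ²H) ∪ {e}` is isomorphic to `K₁ ∨ 4K₄`. -/
theorem statement_10 {G : Type*} [Group G] [Fintype G] (H : Subgroup G) [H.Normal]
    (hcard : Nat.card H = 2) (a : Fin 4 → G)
    (hord : ∀ i, orderOf (QuotientGroup.mk (a i) : G ⧸ H) = 3)
    (hdist : ∀ i j, i ≠ j →
      Subgroup.zpowers (QuotientGroup.mk (a i) : G ⧸ H) ≠
        Subgroup.zpowers (QuotientGroup.mk (a j) : G ⧸ H)) :
    Nonempty (((nsbPowerGraph G H).induce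
      {v : nsbVertexSet H |
        (∃ i, (QuotientGroup.mk (v : G) : G ⧸ H) = QuotientGroup.mk (a i) ∨
          (QuotientGroup.mk (v : G) : G ⧸ H) = QuotientGroup.mk ((a i) ^ 2)) ∨ (v : G) = 1})
      ≃g graphJoin (kGraph 1) (unionKGraph 4 4)) := by
  classical
  obtain ⟨h₀, hh₀H, hh₀ne, hcl⟩ :
      ∃ h₀ : G, h₀ ∈ H ∧ h₀ ≠ 1 ∧ ∀ g ∈ H, g = 1 ∨ g = h₀ := by
    obtain ⟨x, y, hxy, hU⟩ := Nat.card_eq_two_iff.mp hcard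
    have hmem : ∀ z : H, z = x ∨ z = y := by
      intro z
      have : z ∈ ({x, y} : Set H) := hU ▸ Set.mem_univ z
      simpa using this
    rcases hmem 1 with h1 | h1
    · refine ⟨(y : G), y.2, ?_, ?_⟩
      · intro h
        apply hxy
        rw [← h1]
        exact (Subtype.ext h).symm
      · intro g hg
        rcases hmem ⟨g, hg⟩ with h | h
        · left; rw [← h1] at h; exact congrArg Subtype.val h
        · right; exact congrArg Subtype.val h
    · refine ⟨(x : G), x.2, ?_, ?_⟩
      · intro h
        apply hxy
        rw [← h1]
        exact Subtype.ext h
      · intro g hg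
        rcases hmem ⟨g, hg⟩ with h | h
        · right; exact congrArg Subtype.val h
        · left; rw [← h1] at h; exact congrArg Subtype.val h
  set Q := G ⧸ H with hQ
  set bar : Fin 4 → Q := fun i => QuotientGroup.mk (a i) with hbar
  have h₀bar : (QuotientGroup.mk h₀ : Q) = 1 := (QuotientGroup.eq_one_iff _).mpr hh₀H
  set val : Fin 1 ⊕ Fin 4 × Fin 4 → G :=
    Sum.elim (fun _ => 1) (fun p => a p.1 ^ EE p.2 * h₀ ^ DD p.2) with hval
  have mkv : ∀ i j, (QuotientGroup.mk (val (Sum.inr (i, j))) : Q) = bar i ^ EE j := by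
    intro i j
    show (QuotientGroup.mk (a i ^ EE j * h₀ ^ DD j) : Q) = bar i ^ EE j
    rw [QuotientGroup.mk_mul, QuotientGroup.mk_pow, QuotientGroup.mk_pow, h₀bar,
      one_pow, mul_one]
  have hbarpow_ne1 : ∀ i (ε : ℕ), ε = 1 ∨ ε = 2 → bar i ^ ε ≠ 1 := by
    intro i ε hε h
    have := orderOf_dvd_of_pow_eq_one h
    rw [hord i] at this
    have := Nat.le_of_dvd (by rcases hε with rfl | rfl <;> norm_num) this
    rcases hε with rfl | rfl <;> omega
  have hvne1 : ∀ i j, val (Sum.inr (i, j)) ≠ 1 := by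
    intro i j h
    have h2 : (QuotientGroup.mk (val (Sum.inr (i, j))) : Q) = 1 := by
      rw [h, QuotientGroup.mk_one]
    rw [mkv] at h2
    exact hbarpow_ne1 i _ (EE_cases j) h2
  have hA : ∀ i i' (ε k : ℕ), ε = 1 ∨ ε = 2 → bar i ^ ε = bar i' ^ k → i = i' := by
    intro i i' ε k hε h
    by_contra hne
    exact hdist i i' hne (zpowers_eq_of_pow_eq _ _ (hord i) (hord i') ε k hε h)
  have pw : ∀ i (m n : ℕ), bar i ^ m = bar i ^ n ↔ m ≡ n [MOD 3] := by
    intro i m n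
    rw [pow_eq_pow_iff_modEq, hord i]
  have hvalinj : ∀ i j j', val (Sum.inr (i, j)) = val (Sum.inr (i, j')) → j = j' := by
    intro i j j' h
    have hq : bar i ^ EE j = bar i ^ EE j' := by
      rw [← mkv i j, ← mkv i j', h]
    have hE : EE j = EE j' := by
      rw [pw] at hq
      rcases EE_cases j with h1 | h1 <;> rcases EE_cases j' with h2 | h2 <;>
        rw [h1, h2] at hq ⊢ <;> first | rfl | (exfalso; revert hq; decide)
    have hD : DD j = DD j' := by
      have h' : a i ^ EE j * h₀ ^ DD j = a i ^ EE j * h₀ ^ DD j' := by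
        have h'' : a i ^ EE j * h₀ ^ DD j = a i ^ EE j' * h₀ ^ DD j' := h
        rw [h'', hE]
      have hh : h₀ ^ DD j = h₀ ^ DD j' := mul_left_cancel h'
      rcases DD_cases j with h1 | h1 <;> rcases DD_cases j' with h2 | h2 <;>
        rw [h1, h2] at hh
      · rw [h1, h2]
      · exact absurd (by simpa using hh.symm) hh₀ne
      · exact absurd (by simpa using hh) hh₀ne
      · rw [h1, h2]
    exact ED_inj j j' hE hD
  have mem1 : ∀ s, val s ∈ nsbVertexSet H := by
    rintro (x | ⟨i, j⟩)
    · exact Or.inr rfl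
    · left
      intro hmem
      have h2 : (QuotientGroup.mk (val (Sum.inr (i, j))) : Q) = 1 :=
        (QuotientGroup.eq_one_iff _).mpr hmem
      rw [mkv] at h2
      exact hbarpow_ne1 i _ (EE_cases j) h2
  have mem2 : ∀ s, (⟨val s, mem1 s⟩ : nsbVertexSet H) ∈
      {v : nsbVertexSet H |
        (∃ i, (QuotientGroup.mk (v : G) : G ⧸ H) = QuotientGroup.mk (a i) ∨
          (QuotientGroup.mk (v : G) : G ⧸ H) = QuotientGroup.mk ((a i) ^ 2)) ∨ (v : G) = 1} := by
    rintro (x | ⟨i, j⟩)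
    · exact Or.inr rfl
    · left
      refine ⟨i, ?_⟩
      rcases EE_cases j with h1 | h1
      · left
        show (QuotientGroup.mk (val (Sum.inr (i, j))) : Q) = QuotientGroup.mk (a i)
        rw [mkv, h1, pow_one]
      · right
        show (QuotientGroup.mk (val (Sum.inr (i, j))) : Q) = QuotientGroup.mk (a i ^ 2)
        rw [mkv, h1, QuotientGroup.mk_pow]
  set f : Fin 1 ⊕ Fin 4 × Fin 4 →
      {v : nsbVertexSet H |
        (∃ i, (QuotientGroup.mk (v : G) : G ⧸ H) = QuotientGroup.mk (a i) ∨
          (QuotientGroup.mk (v : G) : G ⧸ H) = QuotientGroup.mk ((a i) ^ 2)) ∨ (v : G) = 1} :=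
    fun s => ⟨⟨val s, mem1 s⟩, mem2 s⟩ with hf
  have hbij : Function.Bijective f := by
    constructor
    · rintro (x | ⟨i, j⟩) (y | ⟨i', j'⟩) h
      · exact congrArg Sum.inl (Subsingleton.elim x y)
      · exfalso
        have hv : val (Sum.inl x) = val (Sum.inr (i', j')) :=
          Subtype.ext_iff.mp (Subtype.ext_iff.mp h)
        exact hvne1 i' j' hv.symm
      · exfalso
        have hv : val (Sum.inr (i, j)) = val (Sum.inl y) :=
          Subtype.ext_iff.mp (Subtype.ext_iff.mp h)
        exact hvne1 i j hv
      · have hv : val (Sum.inr (i, j)) = val (Sum.inr (i', j')) :=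
          Subtype.ext_iff.mp (Subtype.ext_iff.mp h)
        have hq : bar i ^ EE j = bar i' ^ EE j' := by
          rw [← mkv i j, ← mkv i' j', hv]
        have hii : i = i' := hA i i' _ _ (EE_cases j) hq
        subst hii
        have hjj := hvalinj i j j' hv
        subst hjj
        rfl
    · rintro ⟨⟨g, hg⟩, hP⟩
      rcases hP with ⟨i, hP⟩ | h1
      · have key : ∀ (ε : ℕ), (QuotientGroup.mk g : Q) = (QuotientGroup.mk (a i ^ ε)) →
            g = a i ^ ε ∨ g = a i ^ ε * h₀ := by
          intro ε h
          have hm : (a i ^ ε)⁻¹ * g ∈ H := QuotientGroup.eq.mp h.symm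
          rcases hcl _ hm with h' | h'
          · left; exact (inv_mul_eq_one.mp h').symm
          · right; exact inv_mul_eq_iff_eq_mul.mp h'
        rcases hP with hP | hP
        · have hP1 : (QuotientGroup.mk g : Q) = QuotientGroup.mk (a i ^ 1) := by
            rwa [pow_one]
          rcases key 1 hP1 with h | h
          · refine ⟨Sum.inr (i, 0), ?_⟩
            apply Subtype.ext; apply Subtype.ext
            show a i ^ EE 0 * h₀ ^ DD 0 = g
            rw [h]; simp [EE, DD]
          · refine ⟨Sum.inr (i, 1), ?_⟩
            apply Subtype.ext; apply Subtype.ext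
            show a i ^ EE 1 * h₀ ^ DD 1 = g
            rw [h]; simp [EE, DD]
        · rcases key 2 hP with h | h
          · refine ⟨Sum.inr (i, 2), ?_⟩
            apply Subtype.ext; apply Subtype.ext
            show a i ^ EE 2 * h₀ ^ DD 2 = g
            rw [h]; simp [EE, DD]
          · refine ⟨Sum.inr (i, 3), ?_⟩
            apply Subtype.ext; apply Subtype.ext
            show a i ^ EE 3 * h₀ ^ DD 3 = g
            rw [h]; simp [EE, DD]
      · exact ⟨Sum.inl 0, Subtype.ext (Subtype.ext h1.symm)⟩
  have hadj_e : ∀ i j, (nsbPowerGraph G H).Adj ⟨val (Sum.inl 0), mem1 _⟩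
      ⟨val (Sum.inr (i, j)), mem1 _⟩ := by
    intro i j
    refine ⟨fun h => hvne1 i j h.symm, Or.inl ⟨3, by norm_num, ?_⟩⟩
    show (QuotientGroup.mk (val (Sum.inl 0)) : Q) = QuotientGroup.mk (val (Sum.inr (i, j)) ^ 3)
    rw [QuotientGroup.mk_pow, mkv]
    show (QuotientGroup.mk (1 : G) : Q) = _
    rw [QuotientGroup.mk_one, ← pow_mul', pow_mul, ← hord i, pow_orderOf_eq_one, one_pow]
  refine ⟨(RelIso.mk (Equiv.ofBijective f hbij) ?_).symm⟩
  rintro (x | ⟨i, j⟩) (y | ⟨i', j'⟩)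
  · have hxy : x = y := Subsingleton.elim x y
    subst hxy
    constructor
    · intro h; exact absurd h (SimpleGraph.irrefl _)
    · intro h; exact absurd h (SimpleGraph.irrefl _)
  · constructor
    · intro _; trivial
    · intro _; exact hadj_e i' j'
  · constructor
    · intro _; trivial
    · intro _; exact (hadj_e i j).symm
  · constructor
    · rintro ⟨hne, hdisj⟩
      have hii : i = i' := by
        rcases hdisj with ⟨m, hm, he⟩ | ⟨n, hn, he⟩
        · have hq : bar i ^ EE j = bar i' ^ (EE j' * m) := by
            rw [pow_mul, ← mkv i j, ← mkv i' j', ← QuotientGroup.mk_pow]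
            exact he
          exact hA i i' _ _ (EE_cases j) hq
        · have hq : bar i' ^ EE j' = bar i ^ (EE j * n) := by
            rw [pow_mul, ← mkv i' j', ← mkv i j, ← QuotientGroup.mk_pow]
            exact he
          exact (hA i' i _ _ (EE_cases j') hq).symm
      subst hii
      refine ⟨rfl, ?_⟩
      intro hjj
      exact hne (by rw [show j = j' from hjj])
    · rintro ⟨hii, hjj⟩
      have hii' : i = i' := hii
      subst hii'
      have hjj' : j ≠ j' := hjj
      refine ⟨fun h => hjj' (hvalinj i j j' h), Or.inl ⟨EE j * EE j', ?_, ?_⟩⟩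
      · rcases EE_cases j with h1 | h1 <;> rcases EE_cases j' with h2 | h2 <;>
          rw [h1, h2] <;> norm_num
      · show (QuotientGroup.mk (val (Sum.inr (i, j))) : Q) =
          QuotientGroup.mk (val (Sum.inr (i, j')) ^ (EE j * EE j'))
        rw [QuotientGroup.mk_pow, mkv, mkv, ← pow_mul, pw]
        rcases EE_cases j with h1 | h1 <;> rcases EE_cases j' with h2 | h2 <;>
          rw [h1, h2] <;> decide
end

section
/- Let G be a finite group and H a normal subgroup of G with |H| = 2 such that the quotient group G/H is isomorphic to the symmetric group S_3. Then the normal subgroup based power graph Γ_H(G) is isomorphic to the graph K_1 ∨ (K_4 ∪ 3K_2). -/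
/-! ### Auxiliary material for Statement 12 -/

namespace Statement12Aux

abbrev S3 := Equiv.Perm (Fin 3)

abbrev Rb (x y : S3) : Prop :=
  (∃ m ∈ Finset.Icc 1 6, x = y ^ m) ∨ (∃ n ∈ Finset.Icc 1 6, y = x ^ n)

instance (x y : S3) : Decidable (Rb x y) := inferInstance

set_option maxRecDepth 4000 in
lemma pow6 : ∀ y : S3, y ^ 6 = 1 := by decide

lemma exists_pow_iff (x y : S3) :
    (∃ m : ℕ, 0 < m ∧ x = y ^ m) ↔ (∃ m ∈ Finset.Icc 1 6, x = y ^ m) := by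
  constructor
  · rintro ⟨m, hm, rfl⟩
    have h6 : y ^ 6 = 1 := pow6 y
    have hmy : y ^ m = y ^ (m % 6) := by
      conv_lhs => rw [← Nat.div_add_mod m 6]
      rw [pow_add, pow_mul, h6, one_pow, one_mul]
    rcases Nat.eq_zero_or_pos (m % 6) with h0 | hp
    · exact ⟨6, by simp, by rw [hmy, h0, pow_zero, ← h6]⟩
    · exact ⟨m % 6, Finset.mem_Icc.mpr ⟨hp, Nat.le_of_lt (Nat.mod_lt _ (by norm_num))⟩, hmy⟩
  · rintro ⟨m, hm, rfl⟩
    exact ⟨m, (Finset.mem_Icc.mp hm).1, rfl⟩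

lemma R_one : ∀ y : S3, Rb 1 y := by decide
lemma R_one' : ∀ x : S3, Rb x 1 := by decide
lemma R_33 : ∀ x y : S3, x ^ 3 = 1 → x ≠ 1 → y ^ 3 = 1 → y ≠ 1 → Rb x y := by decide
lemma R_22 : ∀ x y : S3, x ^ 2 = 1 → x ≠ 1 → y ^ 2 = 1 → y ≠ 1 → (Rb x y ↔ x = y) := by decide
lemma R_23 : ∀ x y : S3, x ^ 2 = 1 → x ≠ 1 → y ^ 3 = 1 → y ≠ 1 → ¬ Rb x y := by decide
lemma R_32 : ∀ x y : S3, x ^ 3 = 1 → x ≠ 1 → y ^ 2 = 1 → y ≠ 1 → ¬ Rb x y := by decide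
lemma hclass : ∀ x : S3, x ≠ 1 → ¬ x ^ 3 = 1 → (x ^ 2 = 1 ∧ x ≠ 1) := by decide
lemma card_C2 : Fintype.card {x : S3 // x ^ 2 = 1 ∧ x ≠ 1} = 3 := by decide
set_option maxRecDepth 4000 in
lemma c3_iff : ∀ x : S3, (x ^ 3 = 1 ∧ x ≠ 1) ↔ (x = finRotate 3 ∨ x = (finRotate 3) ^ 2) := by
  decide
set_option maxRecDepth 4000 in
lemma c3_ne : ¬ ((finRotate 3 : S3) = (finRotate 3) ^ 2) := by decide

/-- The target graph `K₁ ∨ (K₄ ∪ 3K₂)`. -/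
abbrev TG : SimpleGraph (Fin 1 ⊕ (Fin 4 ⊕ Fin 3 × Fin 2)) :=
  graphJoin (kGraph 1) (SimpleGraph.sum (kGraph 4) (unionKGraph 3 2))

lemma TG_11 (x y : Fin 1) : TG.Adj (.inl x) (.inl y) ↔ False := by
  simp only [graphJoin, kGraph, SimpleGraph.top_adj, iff_false, ne_eq, not_not]
  exact Subsingleton.elim x y
lemma TG_1r (x : Fin 1) (y : Fin 4 ⊕ Fin 3 × Fin 2) : TG.Adj (.inl x) (.inr y) ↔ True := Iff.rfl
lemma TG_r1 (x : Fin 1) (y : Fin 4 ⊕ Fin 3 × Fin 2) : TG.Adj (.inr y) (.inl x) ↔ True := Iff.rfl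
lemma TG_44 (i i' : Fin 4) : TG.Adj (.inr (.inl i)) (.inr (.inl i')) ↔ i ≠ i' := by
  simp [graphJoin, kGraph, SimpleGraph.sum]
lemma TG_42 (i : Fin 4) (p : Fin 3 × Fin 2) :
    TG.Adj (.inr (.inl i)) (.inr (.inr p)) ↔ False := by
  simp [graphJoin, SimpleGraph.sum]
lemma TG_24 (i : Fin 4) (p : Fin 3 × Fin 2) :
    TG.Adj (.inr (.inr p)) (.inr (.inl i)) ↔ False := by
  simp [graphJoin, SimpleGraph.sum]
lemma TG_22 (p1 q1 : Fin 3) (p2 q2 : Fin 2) :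
    TG.Adj (.inr (.inr (p1, p2))) (.inr (.inr (q1, q2))) ↔ p1 = q1 ∧ p2 ≠ q2 := by
  simp [graphJoin, SimpleGraph.sum, unionKGraph]

variable {G : Type*} [Group G] [Fintype G]

lemma card_fib {H : Subgroup G} (π : G →* S3) (hker : ∀ g : G, π g = 1 ↔ g ∈ H)
    (hsurj : Function.Surjective π) (hH : Nat.card H = 2) (σ : S3) :
    Fintype.card {g : G // π g = σ} = 2 := by
  obtain ⟨g₀, hg₀⟩ := hsurj σ
  have e : {g : G // π g = σ} ≃ H :=
    { toFun := fun g => ⟨g₀⁻¹ * g.val,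
        (hker _).mp (by rw [map_mul, map_inv, hg₀, g.prop, inv_mul_cancel])⟩
      invFun := fun h => ⟨g₀ * h.val, by rw [map_mul, (hker _).mpr h.prop, hg₀, mul_one]⟩
      left_inv := fun g => by simp
      right_inv := fun h => by simp }
  rw [← Nat.card_eq_fintype_card, Nat.card_congr e, hH]

lemma card_V3 {H : Subgroup G} (π : G →* S3) (hker : ∀ g : G, π g = 1 ↔ g ∈ H)
    (hsurj : Function.Surjective π) (hH : Nat.card H = 2) :
    Fintype.card {g : G // (π g) ^ 3 = 1 ∧ π g ≠ 1} = 4 := by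
  have e1 : {g : G // (π g) ^ 3 = 1 ∧ π g ≠ 1} ≃
      {g : G // π g = finRotate 3 ∨ π g = (finRotate 3) ^ 2} :=
    Equiv.subtypeEquivRight fun g => c3_iff (π g)
  have hd : Disjoint (fun g : G => π g = finRotate 3) (fun g : G => π g = (finRotate 3) ^ 2) := by
    simp only [Pi.disjoint_iff, Prop.disjoint_iff]
    intro g
    exact fun hh => c3_ne (hh.1.symm.trans hh.2)
  rw [Fintype.card_congr e1, Fintype.card_subtype_or_disjoint _ _ hd,
    card_fib π hker hsurj hH, card_fib π hker hsurj hH]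

/-- The forward map of the isomorphism. -/
def myF (H : Subgroup G) (π : G →* S3)
    (e4 : {g : G // (π g) ^ 3 = 1 ∧ π g ≠ 1} ≃ Fin 4)
    (e2 : {x : S3 // x ^ 2 = 1 ∧ x ≠ 1} ≃ Fin 3)
    (eF : ∀ σ : S3, {g : G // π g = σ} ≃ Fin 2)
    (v : ↥(nsbVertexSet H)) : Fin 1 ⊕ (Fin 4 ⊕ Fin 3 × Fin 2) :=
  if h1 : π v.val = 1 then Sum.inl 0
  else if h3 : (π v.val) ^ 3 = 1 then Sum.inr (Sum.inl (e4 ⟨v.val, h3, h1⟩))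
  else Sum.inr (Sum.inr (e2 ⟨π v.val, hclass _ h1 h3⟩, eF (π v.val) ⟨v.val, rfl⟩))

/-- The backward map of the isomorphism. -/
def myFi (H : Subgroup G) (π : G →* S3) (hker : ∀ g : G, π g = 1 ↔ g ∈ H)
    (e4 : {g : G // (π g) ^ 3 = 1 ∧ π g ≠ 1} ≃ Fin 4)
    (e2 : {x : S3 // x ^ 2 = 1 ∧ x ≠ 1} ≃ Fin 3)
    (eF : ∀ σ : S3, {g : G // π g = σ} ≃ Fin 2)
    (t : Fin 1 ⊕ (Fin 4 ⊕ Fin 3 × Fin 2)) : ↥(nsbVertexSet H) :=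
  match t with
  | Sum.inl _ => ⟨1, Or.inr rfl⟩
  | Sum.inr (Sum.inl i) =>
      ⟨(e4.symm i).val, Or.inl fun hm => (e4.symm i).prop.2 ((hker _).mpr hm)⟩
  | Sum.inr (Sum.inr (j, k)) =>
      ⟨((eF (e2.symm j).val).symm k).val, Or.inl fun hm => (e2.symm j).prop.2 (by
        rw [← ((eF (e2.symm j).val).symm k).prop]
        exact (hker _).mpr hm)⟩

lemma eF_congr {π : G →* S3} (eF : ∀ σ : S3, {g : G // π g = σ} ≃ Fin 2)
    {σ τ : S3} (h : σ = τ) (g : G) (hg : π g = σ) (hg' : π g = τ) :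
    eF σ ⟨g, hg⟩ = eF τ ⟨g, hg'⟩ := by subst h; rfl

end Statement12Aux

open Statement12Aux in
/-- If `|H| = 2` and `G/H ≅ S₃`, then `Γ_H(G) ≅ K₁ ∨ (K₄ ∪ 3K₂)`. -/
theorem statement_12 {G : Type*} [Group G] [Fintype G] (H : Subgroup G) [H.Normal]
    (hcard : Nat.card H = 2) (hq : Nonempty (G ⧸ H ≃* Equiv.Perm (Fin 3))) :
    Nonempty (nsbPowerGraph G H ≃g
      graphJoin (kGraph 1) (SimpleGraph.sum (kGraph 4) (unionKGraph 3 2))) := by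
  obtain ⟨φ⟩ := hq
  set π : G →* S3 := φ.toMonoidHom.comp (QuotientGroup.mk' H) with hπ
  have hker : ∀ g : G, π g = 1 ↔ g ∈ H := fun g => by
    rw [show π g = φ (QuotientGroup.mk g) from rfl, MulEquiv.map_eq_one_iff,
      QuotientGroup.eq_one_iff]
  have hsurj : Function.Surjective π := fun σ => by
    obtain ⟨q, hq'⟩ := φ.surjective σ
    obtain ⟨g, rfl⟩ := QuotientGroup.mk'_surjective H q
    exact ⟨g, hq'⟩
  have hmk : ∀ a b : G, ((QuotientGroup.mk a : G ⧸ H) = QuotientGroup.mk b) ↔ π a = π b :=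
    fun a b => (φ.injective.eq_iff (a := QuotientGroup.mk a) (b := QuotientGroup.mk b)).symm
  have key : ∀ x y : G,
      (∃ m : ℕ, 0 < m ∧ (QuotientGroup.mk x : G ⧸ H) = QuotientGroup.mk (y ^ m)) ↔
      (∃ m ∈ Finset.Icc 1 6, π x = (π y) ^ m) := by
    intro x y
    rw [← exists_pow_iff]
    exact exists_congr fun m => and_congr_right fun _ => by rw [hmk, map_pow]
  have hAdj : ∀ a b : ↥(nsbVertexSet H), (nsbPowerGraph G H).Adj a b ↔
      ((a : G) ≠ (b : G) ∧ Rb (π a.val) (π b.val)) := by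
    intro a b
    show ((a : G) ≠ (b : G) ∧ _) ↔ _
    exact and_congr_right fun _ => or_congr (key a b) (key b a)
  let e4 : {g : G // (π g) ^ 3 = 1 ∧ π g ≠ 1} ≃ Fin 4 :=
    Fintype.equivFinOfCardEq (card_V3 π hker hsurj hcard)
  let e2 : {x : S3 // x ^ 2 = 1 ∧ x ≠ 1} ≃ Fin 3 := Fintype.equivFinOfCardEq card_C2
  let eF : ∀ σ : S3, {g : G // π g = σ} ≃ Fin 2 :=
    fun σ => Fintype.equivFinOfCardEq (card_fib π hker hsurj hcard σ)
  have hone : ∀ v : ↥(nsbVertexSet H), π v.val = 1 → v.val = 1 := by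
    intro v h1
    rcases v.prop with h | h
    · exact absurd ((hker _).mp h1) h
    · exact h
  -- case analysis on the image of a vertex
  have hcases : ∀ v : ↥(nsbVertexSet H),
      (π v.val = 1 ∧ myF H π e4 e2 eF v = Sum.inl 0) ∨
      (∃ h : (π v.val) ^ 3 = 1 ∧ π v.val ≠ 1,
        myF H π e4 e2 eF v = Sum.inr (Sum.inl (e4 ⟨v.val, h⟩))) ∨
      (∃ h : (π v.val) ^ 2 = 1 ∧ π v.val ≠ 1,
        myF H π e4 e2 eF v =
          Sum.inr (Sum.inr (e2 ⟨π v.val, h⟩, eF (π v.val) ⟨v.val, rfl⟩))) := by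
    intro v
    by_cases h1 : π v.val = 1
    · exact Or.inl ⟨h1, by rw [myF, dif_pos h1]⟩
    · by_cases h3 : (π v.val) ^ 3 = 1
      · exact Or.inr (Or.inl ⟨⟨h3, h1⟩, by rw [myF, dif_neg h1, dif_pos h3]⟩)
      · exact Or.inr (Or.inr ⟨hclass _ h1 h3, by rw [myF, dif_neg h1, dif_neg h3]⟩)
  -- left inverse
  have hli : Function.LeftInverse (myFi H π hker e4 e2 eF) (myF H π e4 e2 eF) := by
    intro v
    by_cases h1 : π v.val = 1
    · rw [myF, dif_pos h1, myFi]
      exact Subtype.ext (hone v h1).symm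
    · by_cases h3 : (π v.val) ^ 3 = 1
      · rw [myF, dif_neg h1, dif_pos h3, myFi]
        apply Subtype.ext
        show ((e4.symm (e4 ⟨v.val, h3, h1⟩)).val) = v.val
        rw [e4.symm_apply_apply]
      · rw [myF, dif_neg h1, dif_neg h3, myFi]
        apply Subtype.ext
        show ((eF (e2.symm (e2 ⟨π v.val, hclass _ h1 h3⟩)).val).symm
          (eF (π v.val) ⟨v.val, rfl⟩)).val = v.val
        rw [e2.symm_apply_apply]
        exact congrArg Subtype.val ((eF (π v.val)).symm_apply_apply ⟨v.val, rfl⟩)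
  -- right inverse
  have hri : Function.RightInverse (myFi H π hker e4 e2 eF) (myF H π e4 e2 eF) := by
    rintro (i | (i | ⟨j, k⟩))
    · rw [myFi, myF, dif_pos (map_one π)]
      exact congrArg Sum.inl (Subsingleton.elim _ _)
    · have hp := (e4.symm i).prop
      rw [myFi, myF, dif_neg hp.2, dif_pos hp.1]
      have h : (⟨(e4.symm i).val, hp.1, hp.2⟩ :
          {g : G // (π g) ^ 3 = 1 ∧ π g ≠ 1}) = e4.symm i := Subtype.ext rfl
      rw [h, e4.apply_symm_apply]
    · have hσ : π ((eF (e2.symm j).val).symm k).val = (e2.symm j).val :=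
        ((eF (e2.symm j).val).symm k).prop
      have hp2 := (e2.symm j).prop
      have h1 : π ((eF (e2.symm j).val).symm k).val ≠ 1 := by rw [hσ]; exact hp2.2
      have h3 : ¬ (π ((eF (e2.symm j).val).symm k).val) ^ 3 = 1 := by
        rw [hσ]
        intro h
        have hx : (e2.symm j).val = ((e2.symm j).val) ^ 3 := by
          rw [pow_succ, hp2.1, one_mul]
        exact hp2.2 (hx.trans h)
      rw [myFi, myF, dif_neg h1, dif_neg h3]
      refine congrArg _ (congrArg _ (Prod.ext ?_ ?_))
      · have h : (⟨π ((eF (e2.symm j).val).symm k).val,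
            hclass _ h1 h3⟩ : {x : S3 // x ^ 2 = 1 ∧ x ≠ 1}) = e2.symm j := Subtype.ext hσ
        rw [h, e2.apply_symm_apply]
      · refine (eF_congr eF hσ _ rfl hσ).trans ?_
        have h : (⟨((eF (e2.symm j).val).symm k).val, hσ⟩ :
            {g : G // π g = (e2.symm j).val}) = (eF (e2.symm j).val).symm k := Subtype.ext rfl
        rw [h, Equiv.apply_symm_apply]
  refine ⟨⟨⟨myF H π e4 e2 eF, myFi H π hker e4 e2 eF, hli, hri⟩, ?_⟩⟩
  intro a b
  show TG.Adj (myF H π e4 e2 eF a) (myF H π e4 e2 eF b) ↔ _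
  rw [hAdj]
  rcases hcases a with ⟨h1a, Fa⟩ | ⟨ha, Fa⟩ | ⟨ha, Fa⟩ <;>
    rcases hcases b with ⟨h1b, Fb⟩ | ⟨hb, Fb⟩ | ⟨hb, Fb⟩ <;> rw [Fa, Fb]
  · rw [TG_11]
    constructor
    · exact False.elim
    · rintro ⟨hne, -⟩
      exact hne (by rw [hone a h1a, hone b h1b])
  · rw [TG_1r]
    refine iff_of_true trivial ⟨fun he => hb.2 (by rw [← he, h1a]), ?_⟩
    rw [h1a]; exact R_one _
  · rw [TG_1r]
    refine iff_of_true trivial ⟨fun he => hb.2 (by rw [← he, h1a]), ?_⟩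
    rw [h1a]; exact R_one _
  · rw [TG_r1]
    refine iff_of_true trivial ⟨fun he => ha.2 (by rw [he, h1b]), ?_⟩
    rw [h1b]; exact R_one' _
  · rw [TG_44]
    simp only [ne_eq, EmbeddingLike.apply_eq_iff_eq, Subtype.mk.injEq,
      R_33 _ _ ha.1 ha.2 hb.1 hb.2, and_true]
  · rw [TG_42]
    simp only [R_32 _ _ ha.1 ha.2 hb.1 hb.2, and_false, iff_false, not_false_eq_true]
  · rw [TG_r1]
    refine iff_of_true trivial ⟨fun he => ha.2 (by rw [he, h1b]), ?_⟩
    rw [h1b]; exact R_one' _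
  · rw [TG_24]
    simp only [R_23 _ _ ha.1 ha.2 hb.1 hb.2, and_false, iff_false, not_false_eq_true]
  · rw [TG_22]
    simp only [EmbeddingLike.apply_eq_iff_eq, Subtype.mk.injEq, R_22 _ _ ha.1 ha.2 hb.1 hb.2]
    constructor
    · rintro ⟨hp, hne⟩
      refine ⟨fun he => hne ?_, hp⟩
      exact (eF_congr eF hp _ rfl hp).trans (congrArg (eF (π b.val)) (Subtype.ext he))
    · rintro ⟨hne, hp⟩
      refine ⟨hp, fun he => hne ?_⟩
      have hfib : (⟨a.val, hp⟩ : {g : G // π g = π b.val}) = ⟨b.val, rfl⟩ :=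
        (eF (π b.val)).injective ((eF_congr eF hp a.val rfl hp).symm.trans he)
      have hval : (⟨a.val, hp⟩ : {g : G // π g = π b.val}).val =
          (⟨b.val, rfl⟩ : {g : G // π g = π b.val}).val := congrArg Subtype.val hfib
      exact hval
end

section
/- Let G be a finite group and H a normal subgroup of G with |H| = 3 such that the quotient group G/H is isomorphic to the cyclic group Z_3. Then the normal subgroup based power graph Γ_H(G) is isomorphic to the complete graph K_7. -/
/-- If `|H| = 3` and `G/H ≅ Z₃`, then `Γ_H(G) ≅ K₇`. -/
theorem statement_15 {G : Type*} [Group G] [Fintype G] (H : Subgroup G) [H.Normal]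
    (hcard : Nat.card H = 3) (hq : Nonempty (G ⧸ H ≃* Multiplicative (ZMod 3))) :
    Nonempty (nsbPowerGraph G H ≃g kGraph 7) := by

  obtain ⟨φ⟩ := hq
  have hQ : Nat.card (G ⧸ H) = 3 := by
    rw [Nat.card_congr φ.toEquiv]
    simp [Nat.card_eq_fintype_card]
  have hG : Nat.card G = 9 := by
    rw [Subgroup.card_eq_card_quotient_mul_card_subgroup H, hQ, hcard]
  have hcube : ∀ x : G ⧸ H, x ^ 3 = 1 := by
    intro x
    have := pow_card_eq_one' (G := G ⧸ H) (x := x)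
    rwa [hQ] at this
  have hgen : ∀ x y : G ⧸ H, x ≠ 1 → ∃ m : ℕ, 0 < m ∧ y = x ^ m := by
    intro x y hx
    have hord : orderOf x = 3 := by
      have hdvd : orderOf x ∣ 3 := orderOf_dvd_of_pow_eq_one (hcube x)
      rcases (Nat.prime_three.eq_one_or_self_of_dvd _ hdvd) with h | h
      · exact absurd (orderOf_eq_one_iff.mp h) hx
      · exact h
    have htop : Subgroup.zpowers x = ⊤ := by
      apply Subgroup.eq_top_of_card_eq
      rw [Nat.card_zpowers, hord, hQ]
    have hy : y ∈ Submonoid.powers x := by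
      rw [mem_powers_iff_mem_zpowers]
      rw [htop]; exact Subgroup.mem_top y
    obtain ⟨m, hm0⟩ := hy
    have hm : x ^ m = y := hm0
    rcases Nat.eq_zero_or_pos m with h0 | hpos
    · refine ⟨3, by norm_num, ?_⟩
      rw [h0, pow_zero] at hm
      rw [← hm, hcube x]
    · exact ⟨m, hpos, hm.symm⟩
  have hadj : ∀ a b : nsbVertexSet H, a ≠ b → (nsbPowerGraph G H).Adj a b := by
    intro a b hab
    refine And.intro (fun h => hab (Subtype.ext h)) ?_
    by_cases hb : (QuotientGroup.mk (b : G) : G ⧸ H) = 1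
    · right
      refine ⟨3, by norm_num, ?_⟩
      rw [hb]
      have : (QuotientGroup.mk ((a : G) ^ 3) : G ⧸ H)
          = (QuotientGroup.mk (a : G) : G ⧸ H) ^ 3 := rfl
      rw [this, hcube]
    · left
      obtain ⟨m, hm, he⟩ := hgen (QuotientGroup.mk (b : G)) (QuotientGroup.mk (a : G)) hb
      exact ⟨m, hm, he⟩
  -- cardinality of the vertex set
  have hvcard : Nat.card (nsbVertexSet H) = 7 := by
    have h1 : nsbVertexSet H = insert (1 : G) ((H : Set G)ᶜ) := by
      rw [nsbVertexSet, Set.union_singleton]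
      rfl
    rw [Nat.card_coe_set_eq, h1]
    have hnot : (1 : G) ∉ ((H : Set G)ᶜ) := by simp [H.one_mem]
    rw [Set.ncard_insert_of_notMem hnot]
    have hcompl : ((H : Set G)ᶜ).ncard = 6 := by
      have := Set.ncard_add_ncard_compl (H : Set G)
      have hH : (H : Set G).ncard = 3 := by
        rw [← Nat.card_coe_set_eq]
        simpa using hcard
      rw [hH, Nat.card_eq_fintype_card] at this
      have : 3 + ((H : Set G)ᶜ).ncard = 9 := by
        rw [this, ← Nat.card_eq_fintype_card, hG]
      omega
    omega
  have : Finite (nsbVertexSet H) := Finite.Set.finite_union _ _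
  let e : nsbVertexSet H ≃ Fin 7 := Finite.equivFinOfCardEq hvcard
  refine ⟨⟨e, ?_⟩⟩
  intro a b
  constructor
  · intro h
    exact hadj a b (fun hEq => h (congrArg e hEq))
  · intro h
    exact fun hEq => h.ne (e.injective hEq)
end

section
/- Let G be a finite group and H a normal subgroup of G with |H| = 3 such that the quotient group G/H is isomorphic to the symmetric group S_3. Then the normal subgroup based power graph Γ_H(G) is isomorphic to the graph K_1 ∨ (K_6 ∪ 3K_3). -/
abbrev Q3 := Equiv.Perm (Fin 3)
abbrev Q0 := {q : Q3 // q ≠ 1}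

def Rel12 (q q' : Q3) : Prop := ∃ m : Fin 12, q = q' ^ (m.1 + 1)

instance (q q' : Q3) : Decidable (Rel12 q q') := by unfold Rel12; infer_instance

lemma rel12_iff (q q' : Q3) : (∃ m : ℕ, 0 < m ∧ q = q' ^ m) ↔ Rel12 q q' := by
  constructor
  · rintro ⟨m, hm, rfl⟩
    refine ⟨⟨m % 6 + 5, by omega⟩, ?_⟩
    have h6 : q' ^ 6 = 1 := by
      have h : Fintype.card Q3 = 6 := by simp [Fintype.card_perm]; rfl
      rw [← h]; exact pow_card_eq_one
    conv_lhs => rw [← Nat.div_add_mod m 6]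
    rw [pow_add, pow_mul, h6, one_pow, one_mul,
      show m % 6 + 5 + 1 = m % 6 + 6 from rfl, pow_add, h6, mul_one]
  · rintro ⟨m, rfl⟩; exact ⟨m.1 + 1, Nat.succ_pos _, rfl⟩

def c1 : Q3 := Equiv.swap 0 1 * Equiv.swap 0 2
def c2 : Q3 := c1 * c1
def t0 : Q3 := Equiv.swap 0 1
def t1 : Q3 := Equiv.swap 0 2
def t2 : Q3 := Equiv.swap 1 2

def e5 : Q0 × Fin 3 ≃ (Fin 6 ⊕ Fin 3 × Fin 3) where
  toFun p :=
    if p.1.1 = c1 then Sum.inl ⟨p.2.1, by have := p.2.isLt; omega⟩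
    else if p.1.1 = c2 then Sum.inl ⟨p.2.1 + 3, by have := p.2.isLt; omega⟩
    else if p.1.1 = t0 then Sum.inr (0, p.2)
    else if p.1.1 = t1 then Sum.inr (1, p.2)
    else Sum.inr (2, p.2)
  invFun s := match s with
    | Sum.inl k => (⟨if k.1 < 3 then c1 else c2, by split <;> decide⟩, ⟨k.1 % 3, by omega⟩)
    | Sum.inr (t, i) =>
        (⟨if t.1 = 0 then t0 else if t.1 = 1 then t1 else t2, by split <;> [decide; (split <;> decide)]⟩, i)
  left_inv := by decide
  right_inv := by decide

def myAdj : (Fin 6 ⊕ Fin 3 × Fin 3) → (Fin 6 ⊕ Fin 3 × Fin 3) → Prop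
  | Sum.inl x, Sum.inl y => x ≠ y
  | Sum.inr x, Sum.inr y => x.1 = y.1 ∧ x.2 ≠ y.2
  | _, _ => False

instance : DecidableRel myAdj := fun x y => by
  cases x <;> cases y <;> unfold myAdj <;> infer_instance

lemma sum_adj_iff (x y : Fin 6 ⊕ Fin 3 × Fin 3) :
    (SimpleGraph.sum (kGraph 6) (unionKGraph 3 3)).Adj x y ↔ myAdj x y := by
  cases x <;> cases y <;> simp [SimpleGraph.sum, kGraph, unionKGraph, myAdj]

lemma aux_decide : ∀ p p' : Q0 × Fin 3,
    myAdj (e5 p) (e5 p') ↔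
      (p ≠ p' ∧ (Rel12 p.1.1 p'.1.1 ∨ Rel12 p'.1.1 p.1.1)) := by decide


/-- If `|H| = 3` and `G/H ≅ S₃`, then `Γ_H(G) ≅ K₁ ∨ (K₆ ∪ 3K₃)`. -/
theorem statement_16 {G : Type*} [Group G] [Fintype G] (H : Subgroup G) [H.Normal]
    (hcard : Nat.card H = 3) (hq : Nonempty (G ⧸ H ≃* Equiv.Perm (Fin 3))) :
    Nonempty (nsbPowerGraph G H ≃g
      graphJoin (kGraph 1) (SimpleGraph.sum (kGraph 6) (unionKGraph 3 3))) := by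
  classical
  obtain ⟨φ⟩ := hq
  set π : G →* Q3 := φ.toMonoidHom.comp (QuotientGroup.mk' H) with hπdef
  have hπmem : ∀ g : G, π g = 1 ↔ g ∈ H := by
    intro g
    rw [show π g = φ (QuotientGroup.mk g) from rfl, MulEquiv.map_eq_one_iff,
      QuotientGroup.eq_one_iff]
  have hcoset : ∀ (a b : G) (m : ℕ),
      ((QuotientGroup.mk a : G ⧸ H) = QuotientGroup.mk (b ^ m)) ↔ π a = (π b) ^ m := by
    intro a b m
    constructor
    · intro h
      have h2 : π a = π (b ^ m) := congrArg (⇑φ) h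
      rw [h2, map_pow]
    · intro h
      have : φ (QuotientGroup.mk a) = φ (QuotientGroup.mk (b ^ m)) := by
        rw [show φ (QuotientGroup.mk a) = π a from rfl,
          show φ (QuotientGroup.mk (b ^ m)) = π (b ^ m) from rfl, map_pow, h]
      exact φ.injective this
  have hsurj : Function.Surjective π := by
    intro q
    obtain ⟨x, hx⟩ := φ.surjective q
    obtain ⟨g, hg⟩ := QuotientGroup.mk'_surjective H x
    exact ⟨g, by rw [show π g = φ (QuotientGroup.mk' H g) from rfl, hg, hx]⟩
  -- fiber equivalences
  have hfib : ∀ q : Q0, Nonempty ({g : G // π g = q.1} ≃ Fin 3) := by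
    intro q
    obtain ⟨g₀, hg₀⟩ := hsurj q.1
    have eH : {g : G // π g = q.1} ≃ H :=
      { toFun := fun g => ⟨g₀⁻¹ * g.1, by
          rw [← hπmem, map_mul, map_inv, hg₀, g.2, inv_mul_cancel]⟩
        invFun := fun h => ⟨g₀ * h.1, by
          rw [map_mul, hg₀, (hπmem h.1).2 h.2, mul_one]⟩
        left_inv := fun g => by simp
        right_inv := fun h => by simp }
    exact ⟨eH.trans (Finite.equivFinOfCardEq hcard)⟩
  let fibE : ∀ q : Q0, {g : G // π g = q.1} ≃ Fin 3 := fun q => (hfib q).some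
  let S := {g : G // g ∉ H}
  let f : S → Q0 := fun g => ⟨π g.1, fun h1 => g.2 ((hπmem _).1 h1)⟩
  let e_fib : ∀ q : Q0, {s : S // f s = q} ≃ Fin 3 := fun q =>
    (({ toFun := fun s => ⟨s.1.1, congrArg Subtype.val s.2⟩
        invFun := fun g => ⟨⟨g.1, fun hm => q.2 (g.2 ▸ (hπmem g.1).2 hm)⟩, Subtype.ext g.2⟩
        left_inv := fun s => rfl
        right_inv := fun g => rfl } : {s : S // f s = q} ≃ {g : G // π g = q.1})).trans (fibE q)
  let e_split : (nsbVertexSet H) ≃ (Unit ⊕ S) :=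
    { toFun := fun v => if h : (v : G) ∈ H then Sum.inl () else Sum.inr ⟨v, h⟩
      invFun := fun s => match s with
        | Sum.inl _ => ⟨1, Or.inr rfl⟩
        | Sum.inr g => ⟨g.1, Or.inl g.2⟩
      left_inv := fun v => by
        by_cases h : (v : G) ∈ H
        · have hv1 : (v : G) = 1 := v.2.resolve_left (not_not_intro h)
          simp only [dif_pos h]
          exact Subtype.ext hv1.symm
        · simp only [dif_neg h]
      right_inv := fun s => by
        match s with
        | Sum.inl u => simp only [dif_pos (one_mem H)]
        | Sum.inr g => simp only [dif_neg g.2]; rfl }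
  let E1 : (nsbVertexSet H) ≃ (Unit ⊕ Q0 × Fin 3) :=
    e_split.trans (Equiv.sumCongr (Equiv.refl Unit)
      (((Equiv.sigmaFiberEquiv f).symm).trans
        ((Equiv.sigmaCongrRight e_fib).trans (Equiv.sigmaEquivProd Q0 (Fin 3)))))
  have hE1mem : ∀ (v : nsbVertexSet H) (h : (v : G) ∈ H), E1 v = Sum.inl () := by
    intro v h
    show (Equiv.sumCongr _ _) (e_split v) = _
    rw [show e_split v = Sum.inl () from dif_pos h]
    rfl
  have hE1not : ∀ (v : nsbVertexSet H) (h : (v : G) ∉ H),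
      ∃ i, E1 v = Sum.inr (⟨π v.1, fun h1 => h ((hπmem _).1 h1)⟩, i) := by
    intro v h
    refine ⟨e_fib (f ⟨v.1, h⟩) ⟨⟨v.1, h⟩, rfl⟩, ?_⟩
    show (Equiv.sumCongr _ _) (e_split v) = _
    rw [show e_split v = Sum.inr ⟨v.1, h⟩ from dif_neg h]
    rfl
  -- the final equivalence
  let E : (nsbVertexSet H) ≃ (Fin 1 ⊕ (Fin 6 ⊕ Fin 3 × Fin 3)) :=
    E1.trans (Equiv.sumCongr (Equiv.ofUnique Unit (Fin 1)) e5)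
  refine ⟨⟨E, ?_⟩⟩
  intro a b
  show (graphJoin (kGraph 1) (SimpleGraph.sum (kGraph 6) (unionKGraph 3 3))).Adj (E a) (E b) ↔
    (nsbPowerGraph G H).Adj a b
  have hEa : E a = (Equiv.sumCongr (Equiv.ofUnique Unit (Fin 1)) e5) (E1 a) := rfl
  have hEb : E b = (Equiv.sumCongr (Equiv.ofUnique Unit (Fin 1)) e5) (E1 b) := rfl
  by_cases ha : (a : G) ∈ H <;> by_cases hb : (b : G) ∈ H
  · -- both in H: both are 1
    have ha1 : (a : G) = 1 := a.2.resolve_left (not_not_intro ha)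
    have hb1 : (b : G) = 1 := b.2.resolve_left (not_not_intro hb)
    rw [hEa, hEb, hE1mem a ha, hE1mem b hb]
    show (kGraph 1).Adj _ _ ↔ _
    simp only [kGraph, SimpleGraph.top_adj]
    constructor
    · intro h; exact absurd (Subsingleton.elim _ _) h
    · rintro ⟨hne, -⟩; exact absurd (ha1.trans hb1.symm) hne
  · -- a = 1, b ∉ H
    have ha1 : (a : G) = 1 := a.2.resolve_left (not_not_intro ha)
    obtain ⟨j, hj⟩ := hE1not b hb
    rw [hEa, hEb, hE1mem a ha, hj]
    show True ↔ _
    simp only [true_iff]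
    refine ⟨?_, Or.inl ⟨orderOf (b : G), orderOf_pos _, ?_⟩⟩
    · intro h; exact hb (h ▸ ha1 ▸ one_mem H)
    · rw [pow_orderOf_eq_one, ha1]
  · -- b = 1, a ∉ H
    have hb1 : (b : G) = 1 := b.2.resolve_left (not_not_intro hb)
    obtain ⟨i, hi⟩ := hE1not a ha
    rw [hEa, hEb, hE1mem b hb, hi]
    show True ↔ _
    simp only [true_iff]
    refine ⟨?_, Or.inr ⟨orderOf (a : G), orderOf_pos _, ?_⟩⟩
    · intro h; exact ha (h ▸ hb1 ▸ one_mem H)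
    · rw [pow_orderOf_eq_one, hb1]
  · -- both outside H
    obtain ⟨i, hi⟩ := hE1not a ha
    obtain ⟨j, hj⟩ := hE1not b hb
    set qa : Q0 := ⟨π a.1, fun h1 => ha ((hπmem _).1 h1)⟩
    set qb : Q0 := ⟨π b.1, fun h1 => hb ((hπmem _).1 h1)⟩
    rw [hEa, hEb, hi, hj]
    show (SimpleGraph.sum (kGraph 6) (unionKGraph 3 3)).Adj (e5 (qa, i)) (e5 (qb, j)) ↔ _
    rw [sum_adj_iff, aux_decide]
    show ((qa, i) ≠ (qb, j) ∧ (Rel12 (π a.1) (π b.1) ∨ Rel12 (π b.1) (π a.1))) ↔ _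
    have hne_iff : (qa, i) ≠ (qb, j) ↔ (a : G) ≠ (b : G) := by
      constructor
      · intro h hab
        apply h
        have hab2 : a = b := Subtype.ext hab
        have h2 : (Sum.inr (qa, i) : Unit ⊕ Q0 × Fin 3) = Sum.inr (qb, j) := by
          rw [← hi, ← hj, hab2]
        exact Sum.inr.inj h2
      · intro h heq
        apply h
        have : E1 a = E1 b := by rw [hi, hj, heq]
        exact congrArg Subtype.val (E1.injective this)
    have h1 : Rel12 (π a.1) (π b.1) ↔
        (∃ m : ℕ, 0 < m ∧ (QuotientGroup.mk (a : G) : G ⧸ H) = QuotientGroup.mk ((b : G) ^ m)) := by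
      rw [← rel12_iff]
      exact exists_congr fun m => and_congr_right fun _ => (hcoset a.1 b.1 m).symm
    have h2 : Rel12 (π b.1) (π a.1) ↔
        (∃ n : ℕ, 0 < n ∧ (QuotientGroup.mk (b : G) : G ⧸ H) = QuotientGroup.mk ((a : G) ^ n)) := by
      rw [← rel12_iff]
      exact exists_congr fun n => and_congr_right fun _ => (hcoset b.1 a.1 n).symm
    rw [hne_iff, h1, h2]
    rfl
end
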